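/- arXiv:1305.3879 — 2 statements merged into one kernel-verified Lean document; each statement's English description precedes it below -/
import Mathlib

section
/- Let A > 0, T > 0, and τ with (2π/T)τ ≠ kπ for all integers k. Every point (x,y) of the delay embedding {(A sin((2π/T)t), A sin((2π/T)(t+τ))) : t ∈ ℝ} satisfies x² − 2cos((2π/T)τ)xy + y² = A² sin²((2π/T)τ), and conversely every point of this conic lies in the delay embedding; hence the embedding is an ellipse centered at the origin with semi-axes A√(1 ± cos((2π/T)τ)). -/
open Real

lemma exists_sin_cos (a b : ℝ) (h : a ^ 2 + b ^ 2 = 1) :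
    ∃ θ : ℝ, Real.sin θ = a ∧ Real.cos θ = b := by
  have hz : (⟨b, a⟩ : ℂ) ≠ 0 := by
    intro h0
    rw [Complex.ext_iff] at h0
    simp at h0
    rw [h0.1, h0.2] at h
    norm_num at h
  have habs : ‖(⟨b, a⟩ : ℂ)‖ = 1 := by
    rw [Complex.norm_def, Complex.normSq_mk]
    rw [show b * b + a * a = a ^ 2 + b ^ 2 by ring, h, Real.sqrt_one]
  refine ⟨Complex.arg ⟨b, a⟩, ?_, ?_⟩
  · rw [Complex.sin_arg, habs]; simp
  · rw [Complex.cos_arg hz, habs]; simp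

theorem stmt5 (A T τ : ℝ) (hA : 0 < A) (hT : 0 < T)
    (hτ : ∀ k : ℤ, 2 * π / T * τ ≠ k * π) :
    {p : ℝ × ℝ | ∃ t : ℝ, p = (A * sin (2 * π / T * t), A * sin (2 * π / T * (t + τ)))} =
      {p : ℝ × ℝ | p.1 ^ 2 - 2 * cos (2 * π / T * τ) * (p.1 * p.2) + p.2 ^ 2
        = A ^ 2 * (sin (2 * π / T * τ)) ^ 2} := by
  set ω := 2 * π / T with hω
  have hωpos : 0 < ω := by
    apply div_pos _ hT
    positivity
  have hs : Real.sin (ω * τ) ≠ 0 := by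
    intro h0
    rw [Real.sin_eq_zero_iff] at h0
    obtain ⟨n, hn⟩ := h0
    exact hτ n hn.symm
  ext ⟨x, y⟩
  simp only [Set.mem_setOf_eq, Prod.mk.injEq]
  constructor
  · rintro ⟨t, hx, hy⟩
    have hexp : Real.sin (ω * (t + τ)) =
        Real.sin (ω * t) * Real.cos (ω * τ) + Real.cos (ω * t) * Real.sin (ω * τ) := by
      rw [mul_add, Real.sin_add]
    have h1 : Real.sin (ω * t) ^ 2 + Real.cos (ω * t) ^ 2 = 1 := Real.sin_sq_add_cos_sq _
    have h2 : Real.sin (ω * τ) ^ 2 + Real.cos (ω * τ) ^ 2 = 1 := Real.sin_sq_add_cos_sq _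
    subst hx hy
    rw [hexp]
    linear_combination (-A ^ 2 * Real.sin (ω * t) ^ 2) * h2 + (A ^ 2 * Real.sin (ω * τ) ^ 2) * h1
  · intro h
    set c := Real.cos (ω * τ) with hc
    set s := Real.sin (ω * τ) with hsdef
    have hA0 : A ≠ 0 := ne_of_gt hA
    have key : (x / A) ^ 2 + ((y - c * x) / (A * s)) ^ 2 = 1 := by
      have hAs : A * s ≠ 0 := mul_ne_zero hA0 hs
      have pyth : s ^ 2 + c ^ 2 = 1 := Real.sin_sq_add_cos_sq (ω * τ)
      field_simp
      linear_combination h + x ^ 2 * pyth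
    obtain ⟨θ, hsθ, hcθ⟩ := exists_sin_cos (x / A) ((y - c * x) / (A * s)) key
    refine ⟨θ / ω, ?_, ?_⟩
    · rw [mul_div_cancel₀ _ (ne_of_gt hωpos), hsθ]
      field_simp
    · rw [mul_add, mul_div_cancel₀ _ (ne_of_gt hωpos), Real.sin_add, hsθ, hcθ, ← hc, ← hsdef]
      field_simp
      ring
end

section
/- Let A > 0, T1, T2 > 0 with T1 ≠ T2, and τ1, τ2 > 0. If the delay embedding sets U1 = {(A sin((2π/T1)t), A sin((2π/T1)(t+τ1))) : t ∈ ℝ} and U2 = {(A sin((2π/T2)t), A sin((2π/T2)(t+τ2))) : t ∈ ℝ} are equal, and (2π/T_i)τ_i is not an integer multiple of π for i = 1,2, then cos((2π/T1)τ1) = ±cos((2π/T2)τ2). -/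
open Real

theorem stmt7 (A T1 T2 τ1 τ2 : ℝ) (hA : 0 < A) (hT1 : 0 < T1) (hT2 : 0 < T2)
    (hT : T1 ≠ T2) (hτ1 : 0 < τ1) (hτ2 : 0 < τ2)
    (hk1 : ∀ k : ℤ, 2 * π / T1 * τ1 ≠ k * π) (hk2 : ∀ k : ℤ, 2 * π / T2 * τ2 ≠ k * π)
    (heq : {p : ℝ × ℝ | ∃ t : ℝ,
        p = (A * sin (2 * π / T1 * t), A * sin (2 * π / T1 * (t + τ1)))} =
      {p : ℝ × ℝ | ∃ t : ℝ,
        p = (A * sin (2 * π / T2 * t), A * sin (2 * π / T2 * (t + τ2)))}) :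
    cos (2 * π / T1 * τ1) = cos (2 * π / T2 * τ2) ∨
      cos (2 * π / T1 * τ1) = -cos (2 * π / T2 * τ2) := by
  left
  have hmem : ((A : ℝ), A * cos (2 * π / T1 * τ1)) ∈
      {p : ℝ × ℝ | ∃ t : ℝ,
        p = (A * sin (2 * π / T1 * t), A * sin (2 * π / T1 * (t + τ1)))} := by
    refine ⟨T1 / 4, ?_⟩
    have h1 : 2 * π / T1 * (T1 / 4) = π / 2 := by field_simp; ring
    have h2 : 2 * π / T1 * (T1 / 4 + τ1) = π / 2 + 2 * π / T1 * τ1 := by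
      field_simp; ring
    rw [h1, h2, Real.sin_pi_div_two, Real.sin_add, Real.sin_pi_div_two,
      Real.cos_pi_div_two]
    norm_num
  rw [heq] at hmem
  obtain ⟨t, ht⟩ := hmem
  have h1 : A = A * sin (2 * π / T2 * t) := congrArg Prod.fst ht
  have h2 : A * cos (2 * π / T1 * τ1) = A * sin (2 * π / T2 * (t + τ2)) :=
    congrArg Prod.snd ht
  have hs : sin (2 * π / T2 * t) = 1 := by
    have h1' : A * 1 = A * sin (2 * π / T2 * t) := by rw [mul_one]; exact h1
    exact (mul_left_cancel₀ hA.ne' h1').symm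
  have hc : cos (2 * π / T2 * t) = 0 := by
    have h := Real.sin_sq_add_cos_sq (2 * π / T2 * t)
    rw [hs] at h
    have hsq : cos (2 * π / T2 * t) ^ 2 = 0 := by nlinarith
    exact pow_eq_zero_iff (by norm_num) |>.mp hsq
  have h3 : 2 * π / T2 * (t + τ2) = 2 * π / T2 * t + 2 * π / T2 * τ2 := by ring
  rw [h3, Real.sin_add, hs, hc] at h2
  have h4 := mul_left_cancel₀ hA.ne' h2
  simpa using h4
end
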